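/- (Relating ergodic components of f and f^k) Let μ be an f-non-singular finite Borel measure on a compact separable metric space X, where f : X → X is measurable, and let k ≥ 1. If U is a μ-ergodic component with respect to f, then U can be partitioned (mod μ) into at most k μ-ergodic components with respect to f^k. Furthermore, if U_1, U_2 ⊂ U are μ-ergodic components with respect to f^k, then U_2 = f^{-j}(U_1) (mod μ) for some 0 ≤ j < k. -/

import Mathlib

open Set Metric Topology Filter MeasureTheory

/-- A `μ`-ergodic component for `g`: a `g`-invariant set of positive measure all
of whose `g`-invariant subsets have zero or full relative measure.  (`μ` is not
assumed invariant.) -/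
def ErgodicComponent {X : Type*} [MeasurableSpace X] (g : X → X) (μ : Measure X)
    (U : Set X) : Prop :=
  g ⁻¹' U = U ∧ 0 < μ U ∧
    ∀ V : Set X, V ⊆ U → g ⁻¹' V = V → μ V = 0 ∨ μ (U \ V) = 0

/-- `μ` is `f`-non-singular: preimages of null Borel sets are null
(equivalently, `f_*μ ≪ μ`). -/
def NonSingular {X : Type*} [MeasurableSpace X] (f : X → X) (μ : Measure X) : Prop :=
  ∀ Y : Set X, MeasurableSet Y → μ Y = 0 → μ (f ⁻¹' Y) = 0

namespace ECAux
set_option linter.unusedSectionVars false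

variable {X : Type*} [MeasurableSpace X] {f : X → X} {μ : Measure X} {U : Set X}

lemma preimage_null (hns : NonSingular f μ) {Y : Set X} (hY : μ Y = 0) :
    μ (f ⁻¹' Y) = 0 := by
  have h1 : μ (toMeasurable μ Y) = 0 := by rwa [measure_toMeasurable]
  exact measure_mono_null (preimage_mono (subset_toMeasurable μ Y))
    (hns _ (measurableSet_toMeasurable μ Y) h1)

lemma iter_null (hns : NonSingular f μ) (n : ℕ) {Y : Set X} (hY : μ Y = 0) :
    μ (f^[n] ⁻¹' Y) = 0 := by
  induction n with
  | zero => simpa using hY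
  | succ n ih =>
      rw [Function.iterate_succ, Set.preimage_comp]
      exact preimage_null hns ih

lemma preimage_add (a b : ℕ) (Y : Set X) :
    f^[a + b] ⁻¹' Y = f^[b] ⁻¹' (f^[a] ⁻¹' Y) := by
  rw [Function.iterate_add, Set.preimage_comp]

lemma preimage_comm (a b : ℕ) (Y : Set X) :
    f^[a] ⁻¹' (f^[b] ⁻¹' Y) = f^[b] ⁻¹' (f^[a] ⁻¹' Y) := by
  rw [← preimage_add b a, ← preimage_add a b, Nat.add_comm a b]

lemma inv_mul {V : Set X} {d : ℕ} (hV : f^[d] ⁻¹' V = V) (q : ℕ) :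
    f^[q * d] ⁻¹' V = V := by
  induction q with
  | zero => simp
  | succ q ih =>
      have h : (q + 1) * d = q * d + d := by ring
      rw [h, preimage_add, ih, hV]

lemma inv_one_iter (hU : f ⁻¹' U = U) (n : ℕ) : f^[n] ⁻¹' U = U := by
  induction n with
  | zero => simp
  | succ n ih => rw [Function.iterate_succ, Set.preimage_comp, ih, hU]

lemma covering (hU : ErgodicComponent f μ U) {V : Set X} {d : ℕ}
    (hd : 1 ≤ d) (hVU : V ⊆ U) (hV : f^[d] ⁻¹' V = V) (hpos : 0 < μ V) :
    μ (U \ ⋃ j ∈ Finset.range d, f^[j] ⁻¹' V) = 0 := by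
  set S := ⋃ j ∈ Finset.range d, f^[j] ⁻¹' V with hS
  have hmemS : ∀ x, x ∈ S ↔ ∃ j < d, f^[j] x ∈ V := by
    intro x
    simp [hS, Set.mem_iUnion, Finset.mem_range]
  have hSU : S ⊆ U := by
    intro x hx
    rcases (hmemS x).1 hx with ⟨j, hj, hxj⟩
    have h2 : x ∈ f^[j] ⁻¹' U := hVU hxj
    rwa [inv_one_iter hU.1 j] at h2
  have hfS : f ⁻¹' S = S := by
    ext x
    rw [mem_preimage, hmemS, hmemS]
    constructor
    · rintro ⟨j, hj, hxj⟩
      rw [← Function.iterate_succ_apply] at hxj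
      by_cases h : j + 1 < d
      · exact ⟨j + 1, h, hxj⟩
      · have hjd : j + 1 = d := by omega
        refine ⟨0, hd, ?_⟩
        have h2 : x ∈ f^[d] ⁻¹' V := by rw [← hjd]; exact hxj
        rw [hV] at h2
        simpa using h2
    · rintro ⟨j, hj, hxj⟩
      by_cases h : 1 ≤ j
      · refine ⟨j - 1, by omega, ?_⟩
        rw [← Function.iterate_succ_apply]
        have h2 : j - 1 + 1 = j := by omega
        rw [Nat.succ_eq_add_one, h2]; exact hxj
      · have hj0 : j = 0 := by omega
        refine ⟨d - 1, by omega, ?_⟩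
        rw [← Function.iterate_succ_apply]
        have h2 : d - 1 + 1 = d := by omega
        rw [Nat.succ_eq_add_one, h2]
        have hxV : x ∈ V := by rw [hj0] at hxj; simpa using hxj
        rw [← hV] at hxV; exact hxV
  rcases hU.2.2 S hSU hfS with h0 | h1
  · exfalso
    have hVS : V ⊆ S := by
      intro x hx; exact (hmemS x).2 ⟨0, hd, by simpa using hx⟩
    exact hpos.ne' (measure_mono_null hVS h0)
  · exact h1

lemma exists_pos_piece {W V : Set X} {d : ℕ} (hWU : W ⊆ U) (hWpos : 0 < μ W)
    (hcov : μ (U \ ⋃ j ∈ Finset.range d, f^[j] ⁻¹' V) = 0) :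
    ∃ j < d, 0 < μ (W ∩ f^[j] ⁻¹' V) := by
  by_contra h
  push_neg at h
  have h' : ∀ j ∈ Finset.range d, μ (W ∩ f^[j] ⁻¹' V) = 0 := by
    intro j hj
    have := h j (Finset.mem_range.1 hj)
    exact le_antisymm this zero_le
  have hμ1 : μ (⋃ j ∈ Finset.range d, (W ∩ f^[j] ⁻¹' V)) = 0 :=
    le_antisymm ((measure_biUnion_finset_le _ _).trans_eq (Finset.sum_eq_zero h')) zero_le
  have hsub : W ⊆ (U \ ⋃ j ∈ Finset.range d, f^[j] ⁻¹' V) ∪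
      ⋃ j ∈ Finset.range d, (W ∩ f^[j] ⁻¹' V) := by
    intro x hx
    by_cases hxS : x ∈ ⋃ j ∈ Finset.range d, f^[j] ⁻¹' V
    · right
      rcases mem_iUnion₂.1 hxS with ⟨j, hj, hxj⟩
      exact mem_iUnion₂.2 ⟨j, hj, hx, hxj⟩
    · left; exact ⟨hWU hx, hxS⟩
  exact hWpos.ne' (le_antisymm ((measure_mono hsub).trans
    (le_of_eq (measure_union_null hcov hμ1))) zero_le)

lemma reverse_incl (hns : NonSingular f μ) {A : Set X} {k s : ℕ} (hk : 1 ≤ k)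
    (hA : f^[k] ⁻¹' A = A) (h : μ (A \ f^[s] ⁻¹' A) = 0) :
    μ (f^[s] ⁻¹' A \ A) = 0 := by
  have step : ∀ m : ℕ, μ (f^[m * s] ⁻¹' A \ f^[(m + 1) * s] ⁻¹' A) = 0 := by
    intro m
    have h1 : (m + 1) * s = s + m * s := by ring
    have h2 : f^[(m + 1) * s] ⁻¹' A = f^[m * s] ⁻¹' (f^[s] ⁻¹' A) := by
      rw [h1, preimage_add]
    rw [h2, ← Set.preimage_diff]
    exact iter_null hns _ h
  have tele : ∀ t : ℕ, μ (f^[1 * s] ⁻¹' A \ f^[(1 + t) * s] ⁻¹' A) = 0 := by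
    intro t
    induction t with
    | zero => simp
    | succ t ih =>
        have hsub : f^[1 * s] ⁻¹' A \ f^[(1 + (t + 1)) * s] ⁻¹' A ⊆
            (f^[1 * s] ⁻¹' A \ f^[(1 + t) * s] ⁻¹' A) ∪
            (f^[(1 + t) * s] ⁻¹' A \ f^[(1 + t + 1) * s] ⁻¹' A) := by
          intro x hx
          by_cases hxm : x ∈ f^[(1 + t) * s] ⁻¹' A
          · right
            refine ⟨hxm, ?_⟩
            have e : 1 + (t + 1) = 1 + t + 1 := by omega
            rw [← e]; exact hx.2
          · left; exact ⟨hx.1, hxm⟩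
        exact measure_mono_null hsub (measure_union_null ih (step (1 + t)))
  have hfin := tele (k - 1)
  have e : 1 + (k - 1) = k := by omega
  rw [e, one_mul] at hfin
  have hks : f^[k * s] ⁻¹' A = A := by rw [mul_comm]; exact inv_mul hA s
  rwa [hks] at hfin

lemma chain {k d : ℕ}
    (hP : ∀ V' : Set X, V' ⊆ U → f^[k] ⁻¹' V' = V' → 0 < μ V' → 0 < μ (V' ∩ f^[d] ⁻¹' V'))
    {V : Set X} (hVU : V ⊆ U) (hV : f^[k] ⁻¹' V = V) (hpos : 0 < μ V) (t : ℕ) :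
    ∃ C : Set X, C ⊆ V ∧ f^[k] ⁻¹' C = C ∧ 0 < μ C ∧ ∀ q ≤ t, C ⊆ f^[q * d] ⁻¹' V := by
  induction t with
  | zero =>
      refine ⟨V, Subset.rfl, hV, hpos, ?_⟩
      intro q hq
      have hq0 : q = 0 := by omega
      subst hq0; simp
  | succ t ih =>
      obtain ⟨C, hCV, hCinv, hCpos, hCq⟩ := ih
      refine ⟨C ∩ f^[d] ⁻¹' C, inter_subset_left.trans hCV, ?_,
        hP C (hCV.trans hVU) hCinv hCpos, ?_⟩
      · rw [Set.preimage_inter, hCinv, preimage_comm k d, hCinv]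
      · intro q hq
        rcases Nat.eq_zero_or_pos q with h0 | h1
        · subst h0; simpa using (inter_subset_left.trans hCV)
        · obtain ⟨q', rfl⟩ : ∃ q', q = q' + 1 := ⟨q - 1, by omega⟩
          have hsub : C ∩ f^[d] ⁻¹' C ⊆ f^[d] ⁻¹' (f^[q' * d] ⁻¹' V) :=
            inter_subset_right.trans (preimage_mono (hCq q' (by omega)))
          have e : (q' + 1) * d = q' * d + d := by ring
          rw [e, preimage_add]
          exact hsub

lemma cap_pos {k d : ℕ}
    (hP : ∀ V' : Set X, V' ⊆ U → f^[k] ⁻¹' V' = V' → 0 < μ V' → 0 < μ (V' ∩ f^[d] ⁻¹' V'))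
    {V : Set X} (hVU : V ⊆ U) (hV : f^[k] ⁻¹' V = V) (hpos : 0 < μ V) (q : ℕ) :
    0 < μ (V ∩ f^[q * d] ⁻¹' V) := by
  obtain ⟨C, hCV, _, hCpos, hCq⟩ := chain hP hVU hV hpos q
  exact hCpos.trans_le (measure_mono (subset_inter hCV (hCq q le_rfl)))

lemma core {k d : ℕ} (hk : 1 ≤ k)
    (hP : ∀ V' : Set X, V' ⊆ U → f^[k] ⁻¹' V' = V' → 0 < μ V' → 0 < μ (V' ∩ f^[d] ⁻¹' V'))
    {V : Set X} (hVU : V ⊆ U) (hV : f^[k] ⁻¹' V = V) (hpos : 0 < μ V) :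
    ∃ W : Set X, W ⊆ V ∧ f^[d] ⁻¹' W = W ∧ 0 < μ W := by
  obtain ⟨C, hCV, _, hCpos, hCq⟩ := chain hP hVU hV hpos k
  have hkd : ∀ y : X, f^[k * d] y ∈ V ↔ y ∈ V := by
    intro y
    have h1 : f^[k * d] ⁻¹' V = V := by rw [mul_comm]; exact inv_mul hV d
    constructor
    · intro h; have : y ∈ f^[k * d] ⁻¹' V := h; rwa [h1] at this
    · intro h; have : y ∈ f^[k * d] ⁻¹' V := by rw [h1]; exact h
      exact this
  refine ⟨{x | ∀ q < k, f^[q * d] x ∈ V}, ?_, ?_, ?_⟩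
  · intro x hx
    have := hx 0 hk
    simpa using this
  · ext x
    simp only [mem_preimage, mem_setOf_eq]
    constructor
    · intro h q hq
      rcases Nat.eq_zero_or_pos q with h0 | h1
      · subst h0
        have h2 := h (k - 1) (by omega)
        rw [← Function.iterate_add_apply] at h2
        have e : (k - 1) * d + d = k * d := by
          have : k - 1 + 1 = k := by omega
          calc (k - 1) * d + d = (k - 1 + 1) * d := by ring
          _ = k * d := by rw [this]
        rw [e] at h2
        simpa using (hkd x).1 h2
      · obtain ⟨q', rfl⟩ : ∃ q', q = q' + 1 := ⟨q - 1, by omega⟩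
        have h2 := h q' (by omega)
        rw [← Function.iterate_add_apply] at h2
        have e : q' * d + d = (q' + 1) * d := by ring
        rwa [e] at h2
    · intro h q hq
      rw [← Function.iterate_add_apply]
      have e : q * d + d = (q + 1) * d := by ring
      rw [e]
      by_cases hc : q + 1 < k
      · exact h (q + 1) hc
      · have hqk : q + 1 = k := by omega
        rw [hqk]
        have hx0 : x ∈ V := by simpa using h 0 hk
        exact (hkd x).2 hx0
  · refine hCpos.trans_le (measure_mono ?_)
    intro x hx q hq
    exact hCq q (le_of_lt hq) hx

lemma W_disj_lt (hns : NonSingular f μ) {W : Set X} {d : ℕ}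
    (hdisj : ∀ j, 1 ≤ j → j < d → μ (W ∩ f^[j] ⁻¹' W) = 0)
    {i t : ℕ} (hit : i < t) (ht : t < d) :
    μ (f^[i] ⁻¹' W ∩ f^[t] ⁻¹' W) = 0 := by
  have e : t - i + i = t := by omega
  have h1 : f^[t] ⁻¹' W = f^[i] ⁻¹' (f^[t - i] ⁻¹' W) := by
    rw [← preimage_add, e]
  rw [h1, ← Set.preimage_inter]
  exact iter_null hns i (hdisj (t - i) (by omega) (by omega))

lemma comp_erg (hns : NonSingular f μ) (hU : ErgodicComponent f μ U) {k d : ℕ}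
    (hk : 1 ≤ k) (hd : 1 ≤ d) (hdk : d ∣ k)
    (hP : ∀ V' : Set X, V' ⊆ U → f^[k] ⁻¹' V' = V' → 0 < μ V' → 0 < μ (V' ∩ f^[d] ⁻¹' V'))
    {W : Set X} (hWU : W ⊆ U) (hWd : f^[d] ⁻¹' W = W)
    (hdisj : ∀ j, 1 ≤ j → j < d → μ (W ∩ f^[j] ⁻¹' W) = 0)
    {i : ℕ} (hi : i < d) (hpos : 0 < μ (f^[i] ⁻¹' W)) :
    ErgodicComponent (f^[k]) μ (f^[i] ⁻¹' W) := by
  have hWk : f^[k] ⁻¹' W = W := by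
    obtain ⟨c, rfl⟩ := hdk
    rw [mul_comm]; exact inv_mul hWd c
  have hiU : f^[i] ⁻¹' W ⊆ U := by
    intro x hx
    have h2 : x ∈ f^[i] ⁻¹' U := preimage_mono hWU hx
    rwa [inv_one_iter hU.1 i] at h2
  refine ⟨?_, hpos, ?_⟩
  · rw [preimage_comm k i, hWk]
  · intro V hVsub hVinv
    rcases eq_or_ne (μ V) 0 with h0 | h0
    · exact Or.inl h0
    right
    have hVpos : 0 < μ V := pos_iff_ne_zero.2 h0
    have hVU : V ⊆ U := hVsub.trans hiU
    obtain ⟨Vs, hVsV, hVsd, hVspos⟩ := core hk hP hVU hVinv hVpos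
    have hcov := covering hU hd (hVsV.trans hVU) hVsd hVspos
    have hkey : ∀ s, 1 ≤ s → s < d → μ (f^[i] ⁻¹' W ∩ f^[s] ⁻¹' Vs) = 0 := by
      intro s hs1 hsd
      have hsub : f^[s] ⁻¹' Vs ⊆ f^[s] ⁻¹' (f^[i] ⁻¹' W) :=
        preimage_mono (preimage_mono (hVsV.trans hVsub))
      have h1 : f^[s] ⁻¹' (f^[i] ⁻¹' W) = f^[i + s] ⁻¹' W := (preimage_add i s W).symm
      by_cases hc : i + s < d
      · refine measure_mono_null (fun x hx => ?_) (W_disj_lt hns hdisj (show i < i + s by omega) hc)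
        refine ⟨hx.1, ?_⟩
        have := hsub hx.2
        rwa [h1] at this
      · obtain ⟨t, ht_def, htlt⟩ : ∃ t, i + s = d + t ∧ t < i := ⟨i + s - d, by omega, by omega⟩
        have h2 : f^[i + s] ⁻¹' W = f^[t] ⁻¹' W := by rw [ht_def, preimage_add, hWd]
        have hnull : μ (f^[i] ⁻¹' W ∩ f^[t] ⁻¹' W) = 0 := by
          rw [Set.inter_comm]
          exact W_disj_lt hns hdisj htlt hi
        refine measure_mono_null (fun x hx => ?_) hnull
        refine ⟨hx.1, ?_⟩
        have := hsub hx.2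
        rw [h1, h2] at this
        exact this
    have hfinal : f^[i] ⁻¹' W \ V ⊆ (U \ ⋃ s ∈ Finset.range d, f^[s] ⁻¹' Vs) ∪
        ⋃ s ∈ Finset.range d, (if s = 0 then (∅ : Set X) else f^[i] ⁻¹' W ∩ f^[s] ⁻¹' Vs) := by
      intro x hx
      by_cases hxS : x ∈ ⋃ s ∈ Finset.range d, f^[s] ⁻¹' Vs
      · right
        rcases mem_iUnion₂.1 hxS with ⟨s, hs, hxs⟩
        have hs0 : s ≠ 0 := by
          rintro rfl
          exact hx.2 (hVsV (by simpa using hxs))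
        refine mem_iUnion₂.2 ⟨s, hs, ?_⟩
        rw [if_neg hs0]
        exact ⟨hx.1, hxs⟩
      · left; exact ⟨hiU hx.1, hxS⟩
    refine measure_mono_null hfinal (measure_union_null hcov ?_)
    refine le_antisymm ((measure_biUnion_finset_le _ _).trans_eq (Finset.sum_eq_zero ?_)) zero_le
    intro s hs
    by_cases hs0 : s = 0
    · simp [hs0]
    · rw [if_neg hs0]
      exact hkey s (by omega) (Finset.mem_range.1 hs)

lemma meet (hns : NonSingular f μ) (hU : ErgodicComponent f μ U) {k : ℕ} (hk : 1 ≤ k)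
    {A V : Set X} (hA : ErgodicComponent (f^[k]) μ A) (hAU : A ⊆ U)
    (hVU : V ⊆ U) (hVinv : f^[k] ⁻¹' V = V) (hVpos : 0 < μ V) :
    ∃ j < k, μ (A \ f^[j] ⁻¹' V) = 0 := by
  have hcov := covering hU hk hVU hVinv hVpos
  obtain ⟨j, hj, hjpos⟩ := exists_pos_piece hAU hA.2.1 hcov
  have hZinv : f^[k] ⁻¹' (A ∩ f^[j] ⁻¹' V) = A ∩ f^[j] ⁻¹' V := by
    rw [Set.preimage_inter, hA.1, preimage_comm k j, hVinv]
  rcases hA.2.2 _ inter_subset_left hZinv with h0 | h1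
  · exact absurd h0 hjpos.ne'
  · refine ⟨j, hj, measure_mono_null ?_ h1⟩
    intro x hx
    exact ⟨hx.1, fun hxx => hx.2 hxx.2⟩

lemma part2 (hns : NonSingular f μ) (hU : ErgodicComponent f μ U) {k : ℕ} (hk : 1 ≤ k)
    {U₁ U₂ : Set X} (h1 : U₁ ⊆ U) (h2 : U₂ ⊆ U)
    (e1 : ErgodicComponent (f^[k]) μ U₁) (e2 : ErgodicComponent (f^[k]) μ U₂) :
    ∃ j < k, μ ((U₂ \ f^[j] ⁻¹' U₁) ∪ (f^[j] ⁻¹' U₁ \ U₂)) = 0 := by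
  obtain ⟨j, hj, hj0⟩ := meet hns hU hk e2 h2 h1 e1.1 e1.2.1
  obtain ⟨i, hi, hi0⟩ := meet hns hU hk e1 h1 h2 e2.1 e2.2.1
  have h3 : μ (f^[j] ⁻¹' U₁ \ f^[i + j] ⁻¹' U₂) = 0 := by
    have h4 := iter_null hns j hi0
    rwa [Set.preimage_diff, ← preimage_add] at h4
  set s := (i + j) % k with hs_def
  have hsk : f^[i + j] ⁻¹' U₂ = f^[s] ⁻¹' U₂ := by
    rw [show i + j = k * ((i + j) / k) + s from (Nat.div_add_mod _ _).symm, preimage_add,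
      show f^[k * ((i + j) / k)] ⁻¹' U₂ = U₂ from by rw [mul_comm]; exact inv_mul e2.1 _]
  rw [hsk] at h3
  have h4 : μ (U₂ \ f^[s] ⁻¹' U₂) = 0 := by
    refine measure_mono_null (fun x hx => ?_) (measure_union_null hj0 h3)
    by_cases hxj : x ∈ f^[j] ⁻¹' U₁
    · right; exact ⟨hxj, hx.2⟩
    · left; exact ⟨hx.1, hxj⟩
  have h5 : μ (f^[s] ⁻¹' U₂ \ U₂) = 0 := reverse_incl hns hk e2.1 h4
  refine ⟨j, hj, measure_union_null hj0 ?_⟩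
  refine measure_mono_null (fun x hx => ?_) (measure_union_null h3 h5)
  by_cases hxs : x ∈ f^[s] ⁻¹' U₂
  · right; exact ⟨hxs, hx.2⟩
  · left; exact ⟨hx.1, hxs⟩

end ECAux

open ECAux

/-- **Relating ergodic components of `f` and `f^k`.** If `μ` is `f`-non-singular
and `U` is a `μ`-ergodic component with respect to `f`, then `U` can be
partitioned (mod `μ`) into at most `k` `μ`-ergodic components with respect to
`f^[k]`; moreover, any two ergodic components `U₁, U₂ ⊆ U` with respect to
`f^[k]` satisfy `U₂ = f^{-j}(U₁)` (mod `μ`) for some `0 ≤ j < k`. -/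
theorem ergodic_components_of_iterate
    {X : Type*} [MetricSpace X] [CompactSpace X] [TopologicalSpace.SeparableSpace X]
    [MeasurableSpace X] [BorelSpace X]
    (f : X → X) (hf : Measurable f) (μ : Measure X) [IsFiniteMeasure μ]
    (hns : NonSingular f μ)
    (k : ℕ) (hk : 1 ≤ k)
    (U : Set X) (hU : ErgodicComponent f μ U) :
    (∃ (m : ℕ) (W : Fin m → Set X), 1 ≤ m ∧ m ≤ k ∧
      (∀ i, W i ⊆ U) ∧
      (∀ i, ErgodicComponent (f^[k]) μ (W i)) ∧
      (∀ i j, i ≠ j → μ (W i ∩ W j) = 0) ∧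
      μ (U \ ⋃ i, W i) = 0) ∧
    ∀ U₁ U₂ : Set X, U₁ ⊆ U → U₂ ⊆ U →
      ErgodicComponent (f^[k]) μ U₁ → ErgodicComponent (f^[k]) μ U₂ →
      ∃ j < k, μ ((U₂ \ f^[j] ⁻¹' U₁) ∪ (f^[j] ⁻¹' U₁ \ U₂)) = 0 := by
  classical
  have hUk : f^[k] ⁻¹' U = U := inv_one_iter hU.1 k
  constructor
  · -- Part 1
    -- the predicate Q
    have hQk : 1 ≤ k ∧ ∀ V : Set X, V ⊆ U → f^[k] ⁻¹' V = V → 0 < μ V →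
        0 < μ (V ∩ f^[k] ⁻¹' V) := by
      refine ⟨hk, fun V _ hVinv hVpos => ?_⟩
      rw [hVinv, Set.inter_self]
      exact hVpos
    have hQ : ∃ d : ℕ, 1 ≤ d ∧ ∀ V : Set X, V ⊆ U → f^[k] ⁻¹' V = V → 0 < μ V →
        0 < μ (V ∩ f^[d] ⁻¹' V) := ⟨k, hQk⟩
    obtain ⟨hd1, hdP⟩ := Nat.find_spec hQ
    set d := Nat.find hQ with hd_def
    have hdk_le : d ≤ k := Nat.find_le hQk
    -- d divides k
    have hdvd : d ∣ k := by
      rcases Nat.eq_zero_or_pos (k % d) with h0 | hr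
      · exact Nat.dvd_of_mod_eq_zero h0
      exfalso
      have hrd : k % d < d := Nat.mod_lt _ hd1
      have hQr : 1 ≤ k % d ∧ ∀ V : Set X, V ⊆ U → f^[k] ⁻¹' V = V → 0 < μ V →
          0 < μ (V ∩ f^[k % d] ⁻¹' V) := by
        refine ⟨hr, ?_⟩
        intro V hVU hVinv hVpos
        rw [pos_iff_ne_zero]
        intro hnull
        have h1 : μ (f^[d * (k / d)] ⁻¹' (V ∩ f^[k % d] ⁻¹' V)) = 0 := iter_null hns _ hnull
        rw [Set.preimage_inter, ← ECAux.preimage_add, Nat.mod_add_div, hVinv] at h1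
        have h2 := cap_pos hdP hVU hVinv hVpos (k / d)
        rw [mul_comm] at h2
        rw [Set.inter_comm] at h1
        exact h2.ne' h1
      exact Nat.find_min hQ hrd hQr
    -- bad witnesses below d
    have hbad : ∀ j, 1 ≤ j → j < d → ∃ V : Set X, V ⊆ U ∧ f^[k] ⁻¹' V = V ∧
        0 < μ V ∧ μ (V ∩ f^[j] ⁻¹' V) = 0 := by
      intro j hj1 hjd
      have hnQ := Nat.find_min hQ hjd
      push_neg at hnQ
      obtain ⟨V, hVU, hVinv, hVpos, hV0⟩ := hnQ hj1
      exact ⟨V, hVU, hVinv, hVpos, le_antisymm hV0 zero_le⟩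
    -- build W
    have hbuild : ∀ n : ℕ, ∃ W : Set X, W ⊆ U ∧ f^[d] ⁻¹' W = W ∧ 0 < μ W ∧
        ∀ j, 1 ≤ j → j < d → j ≤ n → μ (W ∩ f^[j] ⁻¹' W) = 0 := by
      intro n
      induction n with
      | zero =>
          obtain ⟨W, hWU, hWd, hWpos⟩ := core hk hdP Subset.rfl hUk hU.2.1
          exact ⟨W, hWU, hWd, hWpos, fun j hj1 _ hj0 => by omega⟩
      | succ n ih =>
          obtain ⟨W, hWU, hWd, hWpos, hWdisj⟩ := ih
          by_cases hcase : n + 1 < d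
          · obtain ⟨V, hVU, hVinv, hVpos, hVnull⟩ := hbad (n + 1) (by omega) hcase
            obtain ⟨Vs, hVsV, hVsd, hVspos⟩ := core hk hdP hVU hVinv hVpos
            have hVsnull : μ (Vs ∩ f^[n + 1] ⁻¹' Vs) = 0 :=
              measure_mono_null (Set.inter_subset_inter hVsV (preimage_mono hVsV)) hVnull
            have hcov := covering hU hd1 (hVsV.trans hVU) hVsd hVspos
            obtain ⟨i, hi, hipos⟩ := exists_pos_piece hWU hWpos hcov
            refine ⟨W ∩ f^[i] ⁻¹' Vs, inter_subset_left.trans hWU, ?_, hipos, ?_⟩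
            · rw [Set.preimage_inter, hWd, preimage_comm d i, hVsd]
            · intro j hj1 hjd hjn
              by_cases hj : j ≤ n
              · exact measure_mono_null (Set.inter_subset_inter inter_subset_left
                  (preimage_mono inter_subset_left)) (hWdisj j hj1 hjd hj)
              · have hjn1 : j = n + 1 := by omega
                have hkey : μ (f^[i] ⁻¹' (Vs ∩ f^[j] ⁻¹' Vs)) = 0 := by
                  rw [hjn1]; exact iter_null hns i hVsnull
                refine measure_mono_null ?_ hkey
                intro x hx
                rw [Set.preimage_inter]
                refine ⟨hx.1.2, ?_⟩
                have h3 : x ∈ f^[j] ⁻¹' (f^[i] ⁻¹' Vs) := hx.2.2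
                rwa [preimage_comm j i] at h3
          · refine ⟨W, hWU, hWd, hWpos, ?_⟩
            intro j hj1 hjd hjn
            exact hWdisj j hj1 hjd (by omega)
    obtain ⟨W, hWU, hWd, hWpos, hWdisj'⟩ := hbuild d
    have hWdisj : ∀ j, 1 ≤ j → j < d → μ (W ∩ f^[j] ⁻¹' W) = 0 :=
      fun j h1 h2 => hWdisj' j h1 h2 (le_of_lt h2)
    -- choose m
    have hR : ∃ j : ℕ, j = d ∨ μ (f^[j] ⁻¹' W) = 0 := ⟨d, Or.inl rfl⟩
    set m := Nat.find hR with hm_def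
    have hmle : m ≤ d := Nat.find_le (Or.inl rfl)
    have hm_pos : ∀ j < m, 0 < μ (f^[j] ⁻¹' W) := by
      intro j hj
      have := Nat.find_min hR hj
      push_neg at this
      exact pos_iff_ne_zero.2 this.2
    have hm1 : 1 ≤ m := by
      by_contra h
      have hm0 : m = 0 := by omega
      have hspec := Nat.find_spec hR
      rw [← hm_def, hm0] at hspec
      rcases hspec with h1 | h2
      · omega
      · rw [Function.iterate_zero, Set.preimage_id] at h2
        exact hWpos.ne' h2
    have hm_null : ∀ j, m ≤ j → j < d → μ (f^[j] ⁻¹' W) = 0 := by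
      intro j hj hjd
      have hmnull : μ (f^[m] ⁻¹' W) = 0 := by
        rcases Nat.find_spec hR with h1 | h2
        · omega
        · exact h2
      have he : f^[j] ⁻¹' W = f^[j - m] ⁻¹' (f^[m] ⁻¹' W) := by
        rw [← ECAux.preimage_add, show m + (j - m) = j from by omega]
      rw [he]
      exact iter_null hns _ hmnull
    refine ⟨m, fun i => f^[(i : ℕ)] ⁻¹' W, hm1, hmle.trans hdk_le, ?_, ?_, ?_, ?_⟩
    · intro i x hx
      have h2 : x ∈ f^[(i : ℕ)] ⁻¹' U := preimage_mono hWU hx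
      rwa [inv_one_iter hU.1] at h2
    · intro i
      exact comp_erg hns hU hk hd1 hdvd hdP hWU hWd hWdisj
        (lt_of_lt_of_le i.2 hmle) (hm_pos i i.2)
    · intro i j hne
      rcases Nat.lt_or_ge (i : ℕ) (j : ℕ) with hlt | hge
      · exact W_disj_lt hns hWdisj hlt (lt_of_lt_of_le j.2 hmle)
      · have hlt : (j : ℕ) < (i : ℕ) := by
          rcases Nat.eq_or_lt_of_le hge with h | h
          · exact absurd (Fin.ext h.symm) hne
          · exact h
        rw [Set.inter_comm]
        exact W_disj_lt hns hWdisj hlt (lt_of_lt_of_le i.2 hmle)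
    · have hcovW := covering hU hd1 hWU hWd hWpos
      have hsub : U \ (⋃ i : Fin m, f^[(i : ℕ)] ⁻¹' W) ⊆
          (U \ ⋃ j ∈ Finset.range d, f^[j] ⁻¹' W) ∪
          ⋃ j ∈ Finset.range d, (if j < m then (∅ : Set X) else f^[j] ⁻¹' W) := by
        intro x hx
        by_cases hxS : x ∈ ⋃ j ∈ Finset.range d, f^[j] ⁻¹' W
        · right
          rcases mem_iUnion₂.1 hxS with ⟨j, hj, hxj⟩
          have hjm : ¬ j < m := by
            intro hjm
            exact hx.2 (mem_iUnion.2 ⟨⟨j, hjm⟩, hxj⟩)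
          refine mem_iUnion₂.2 ⟨j, hj, ?_⟩
          rw [if_neg hjm]
          exact hxj
        · left; exact ⟨hx.1, hxS⟩
      refine measure_mono_null hsub (measure_union_null hcovW ?_)
      refine le_antisymm ((measure_biUnion_finset_le _ _).trans_eq
        (Finset.sum_eq_zero ?_)) zero_le
      intro j hj
      by_cases hjm : j < m
      · simp [hjm]
      · rw [if_neg hjm]
        exact hm_null j (by omega) (Finset.mem_range.1 hj)
  · -- Part 2
    intro U₁ U₂ h1 h2 e1 e2
    exact part2 hns hU hk h1 h2 e1 e2
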